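/- If G is a non-compact Polish group, then there exist a neighbourhood U of the identity and a sequence (x_n) in G such that either the translates x_n·U are pairwise disjoint or the translates x_n⁻¹·U are pairwise disjoint. -/

import Mathlib

open Set Topology Pointwise
open Filter

private lemma greedy_cover {G : Type*} [Group G] {U : Set G}
    (h : ∀ x : ℕ → G, ¬ Pairwise fun m n => Disjoint (x m • U) (x n • U)) :
    ∃ F : Finset G, ∀ g : G, ∃ f ∈ F, ¬ Disjoint (g • U) (f • U) := by
  by_contra hc
  push_neg at hc
  choose χ hχ using hc
  letI := Classical.decEq G
  let p : ℕ → G × Finset G :=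
    fun n => Nat.rec (⟨χ ∅, {χ ∅}⟩) (fun _ q => ⟨χ q.2, insert (χ q.2) q.2⟩) n
  have hmem : ∀ n, (p n).1 ∈ (p n).2 := by
    intro n; cases n with
    | zero => simp [p]
    | succ k => simp [p]
  have hsub : ∀ n, (p n).2 ⊆ (p (n+1)).2 := by
    intro n; simp [p, Finset.subset_insert]
  have hle : ∀ m n, m ≤ n → (p m).1 ∈ (p n).2 := by
    intro m n hmn
    induction n with
    | zero => simpa [Nat.le_zero.mp hmn] using hmem 0
    | succ k ih =>
      rcases Nat.lt_or_ge m (k+1) with hk | hk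
      · exact hsub k (ih (Nat.lt_succ_iff.mp hk))
      · have : m = k + 1 := le_antisymm hmn hk
        simpa [this] using hmem (k+1)
  have key : ∀ m n, m < n → Disjoint ((p n).1 • U) ((p m).1 • U) := by
    intro m n hmn
    cases n with
    | zero => omega
    | succ k =>
      have : (p m).1 ∈ (p k).2 := hle m k (Nat.lt_succ_iff.mp hmn)
      exact hχ (p k).2 _ this
  exact h (fun n => (p n).1) (fun m n hmn => by
    rcases Nat.lt_or_ge m n with h' | h'
    · exact (key m n h').symm
    · exact key n m (lt_of_le_of_ne h' (Ne.symm hmn)))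

private lemma isGδ_preimage {X Y : Type*} [TopologicalSpace X] [TopologicalSpace Y]
    {s : Set Y} (hs : IsGδ s) {f : X → Y} (hf : Continuous f) : IsGδ (f ⁻¹' s) := by
  obtain ⟨T, hTo, hTc, rfl⟩ := hs
  rw [Set.preimage_sInter]
  exact IsGδ.biInter hTc fun t ht => ((hTo t ht).preimage hf).isGδ

private lemma isGδ_range_of_polish {X Y : Type*} [TopologicalSpace X] [PolishSpace X]
    [TopologicalSpace Y] [T2Space Y] {i : X → Y} (hi : IsInducing i) (hd : DenseRange i) :
    IsGδ (range i) := by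
  letI := TopologicalSpace.upgradeIsCompletelyMetrizable X
  have key : range i = ⋂ k : ℕ, ⋃₀ {U : Set Y |
      IsOpen U ∧ ∀ a ∈ i ⁻¹' U, ∀ b ∈ i ⁻¹' U, dist a b ≤ 1 / (k + 1)} := by
    apply Subset.antisymm
    · rintro _ ⟨g, rfl⟩
      refine mem_iInter.2 fun k => ?_
      have hball : Metric.ball g (1 / (k + 1) / 2) ∈ 𝓝 g := by
        apply Metric.ball_mem_nhds
        positivity
      rw [hi.nhds_eq_comap, mem_comap] at hball
      obtain ⟨W, hW, hWsub⟩ := hball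
      obtain ⟨U, hUW, hUo, hgU⟩ := mem_nhds_iff.1 hW
      refine ⟨U, ⟨hUo, fun a ha b hb => ?_⟩, hgU⟩
      have ha' : a ∈ Metric.ball g (1 / (k + 1) / 2) := hWsub (hUW ha)
      have hb' : b ∈ Metric.ball g (1 / (k + 1) / 2) := hWsub (hUW hb)
      have := dist_triangle a g b
      rw [Metric.mem_ball] at ha' hb'
      rw [dist_comm g b] at *
      have h2 : (1:ℝ) / (k + 1) / 2 + 1 / (k + 1) / 2 = 1 / (k+1) := add_halves _
      linarith
    · intro y hy
      rw [mem_iInter] at hy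
      set F : Filter X := comap i (𝓝 y) with hF
      have hne : F.NeBot := by
        rw [hF, comap_neBot_iff]
        intro t ht
        obtain ⟨z, hzt, g, rfl⟩ := mem_closure_iff_nhds.1 (hd y) t ht
        exact ⟨g, hzt⟩
      have hcauchy : Cauchy F := by
        rw [Metric.cauchy_iff]
        refine ⟨hne, fun ε hε => ?_⟩
        obtain ⟨k, hk⟩ := exists_nat_one_div_lt hε
        obtain ⟨U, ⟨hUo, hUd⟩, hyU⟩ := hy k
        refine ⟨i ⁻¹' U, preimage_mem_comap (hUo.mem_nhds hyU), fun a ha b hb => ?_⟩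
        exact lt_of_le_of_lt (hUd a ha b hb) hk
      obtain ⟨g, hg⟩ := CompleteSpace.complete hcauchy
      have h1 : map i F ≤ 𝓝 y := map_comap_le
      have h2 : map i F ≤ 𝓝 (i g) := (map_mono hg).trans (hi.continuous.tendsto g)
      haveI : (map i F).NeBot := hne.map i
      have : i g = y := tendsto_nhds_unique (l := map i F) h2 h1
      exact ⟨g, this⟩
  rw [key]
  exact IsGδ.iInter_of_isOpen fun k => isOpen_sUnion fun U hU => hU.1

/-- in a non-compact Polish group there are a neighbourhood `U` of the
identity and a sequence `(x n)` such that either the translates `x n • U` are pairwise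
disjoint or the translates `(x n)⁻¹ • U` are pairwise disjoint. -/
theorem noncompact_polish_group_disjoint_translates
    {G : Type*} [Group G] [TopologicalSpace G] [IsTopologicalGroup G] [PolishSpace G]
    (hnc : ¬ CompactSpace G) :
    ∃ U ∈ nhds (1 : G), ∃ x : ℕ → G,
      (Pairwise fun m n => Disjoint (x m • U) (x n • U)) ∨
      (Pairwise fun m n => Disjoint ((x m)⁻¹ • U) ((x n)⁻¹ • U)) := by
  by_contra hcon
  push_neg at hcon
  -- Step 1: left covers
  have covL : ∀ W ∈ 𝓝 (1:G), ∃ F : Finset G, ∀ g : G, ∃ f ∈ F, f⁻¹ * g ∈ W := by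
    intro W hW
    obtain ⟨V, hVo, hV1, hVW⟩ := exists_open_nhds_one_mul_subset hW
    set V' : Set G := V ∩ V⁻¹ with hV'
    have hV'n : V' ∈ 𝓝 (1:G) := by
      apply Filter.inter_mem (hVo.mem_nhds hV1)
      exact inv_mem_nhds_one G (hVo.mem_nhds hV1)
    obtain ⟨F, hF⟩ := greedy_cover (U := V') (fun x => (hcon V' hV'n x).1)
    refine ⟨F, fun g => ?_⟩
    obtain ⟨f, hfF, hnd⟩ := hF g
    rw [Set.not_disjoint_iff] at hnd
    obtain ⟨a, ⟨u, hu, hau⟩, ⟨v, hv, hav⟩⟩ := hnd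
    refine ⟨f, hfF, ?_⟩
    have hgu : g * u = f * v := by
      have := hau.trans hav.symm
      simpa [smul_eq_mul] using this
    have hveq : v = f⁻¹ * (g * u) := by rw [hgu, inv_mul_cancel_left]
    have heq : f⁻¹ * g = v * u⁻¹ := by rw [hveq]; group
    rw [heq]
    have hvV : v ∈ V := hv.1
    have huV : u⁻¹ ∈ V := hu.2
    exact hVW (Set.mul_mem_mul hvV huV)
  -- Step 1': right covers
  have covR : ∀ W ∈ 𝓝 (1:G), ∃ F : Finset G, ∀ g : G, ∃ f ∈ F, g * f⁻¹ ∈ W := by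
    intro W hW
    letI := Classical.decEq G
    obtain ⟨F, hF⟩ := covL W⁻¹ (inv_mem_nhds_one G hW)
    refine ⟨F.image (·⁻¹), fun g => ?_⟩
    obtain ⟨f, hf, hmem⟩ := hF g⁻¹
    refine ⟨f⁻¹, Finset.mem_image_of_mem _ hf, ?_⟩
    have : (f⁻¹ * g⁻¹)⁻¹ ∈ W := Set.inv_mem_inv.mp (by simpa using hmem)
    simpa [mul_inv_rev] using this
  -- Step 2: small invariant neighbourhoods
  have sin : ∀ U ∈ 𝓝 (1:G), ∃ V ∈ 𝓝 (1:G), ∀ g : G, ∀ a ∈ V, g * a * g⁻¹ ∈ U := by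
    intro U hU
    obtain ⟨A, hAo, hA1, hAU⟩ := exists_open_nhds_one_mul_subset hU
    obtain ⟨B, hBo, hB1, hBA⟩ := exists_open_nhds_one_mul_subset (hAo.mem_nhds hA1)
    have hBsubA : B ⊆ A := fun b hb => by
      simpa using hBA (Set.mul_mem_mul hb hB1)
    set C : Set G := B ∩ B⁻¹ with hC
    have hCn : C ∈ 𝓝 (1:G) :=
      Filter.inter_mem (hBo.mem_nhds hB1) (inv_mem_nhds_one G (hBo.mem_nhds hB1))
    have hCCC : ∀ c1 ∈ C, ∀ c2 ∈ C, ∀ c3 ∈ C, c1 * c2 * c3 ∈ U := by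
      intro c1 h1 c2 h2 c3 h3
      have h12 : c1 * c2 ∈ A := hBA (Set.mul_mem_mul h1.1 h2.1)
      exact hAU (Set.mul_mem_mul h12 (hBsubA h3.1))
    obtain ⟨F, hF⟩ := covR C hCn
    have hWf : ∀ f : G, {a : G | f * a * f⁻¹ ∈ C} ∈ 𝓝 (1:G) := by
      intro f
      have hcont : Tendsto (fun a : G => f * a * f⁻¹) (𝓝 1) (𝓝 1) := by
        have h : Continuous (fun a : G => f * a * f⁻¹) :=
          (continuous_const.mul continuous_id).mul continuous_const
        have := h.tendsto (1 : G)
        simpa using this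
      exact hcont hCn
    refine ⟨⋂ f ∈ F, {a : G | f * a * f⁻¹ ∈ C}, ?_, ?_⟩
    · exact (Filter.biInter_finset_mem F).mpr fun f _ => hWf f
    · intro g a ha
      obtain ⟨f, hfF, hgf⟩ := hF g
      have haf : f * a * f⁻¹ ∈ C := by
        have := Set.mem_iInter₂.mp ha f hfF
        exact this
      have hginv : (g * f⁻¹)⁻¹ ∈ C := by
        rcases hgf with ⟨h1, h2⟩
        refine ⟨Set.mem_inv.mp h2, ?_⟩
        rw [Set.mem_inv, inv_inv]
        exact h1
      have hgag : g * a * g⁻¹ = (g * f⁻¹) * (f * a * f⁻¹) * (g * f⁻¹)⁻¹ := by group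
      rw [hgag]
      exact hCCC _ hgf _ haf _ hginv
  -- Step 2': the key combined estimate
  have main : ∀ U ∈ 𝓝 (1:G), ∃ V ∈ 𝓝 (1:G),
      ∀ c a b : G, a ∈ V → b ∈ V → (c * a⁻¹ * c⁻¹) * b ∈ U := by
    intro U hU
    obtain ⟨A, hAo, hA1, hAU⟩ := exists_open_nhds_one_mul_subset hU
    obtain ⟨V₀, hV₀, hV₀c⟩ := sin A (hAo.mem_nhds hA1)
    refine ⟨V₀⁻¹ ∩ A, Filter.inter_mem (inv_mem_nhds_one G hV₀) (hAo.mem_nhds hA1),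
      fun c a b ha hb => ?_⟩
    have h1 : c * a⁻¹ * c⁻¹ ∈ A := hV₀c c a⁻¹ (Set.mem_inv.mp ha.1)
    exact hAU (Set.mul_mem_mul h1 hb.2)
  -- Step 3: the two-sided uniform structure
  letI 𝔘 : UniformSpace G := IsTopologicalGroup.rightUniformSpace G
  have hdiv : UniformContinuous (fun p : G × G => p.1 / p.2) := by
    rw [UniformContinuous, Filter.tendsto_def]
    intro s hs
    obtain ⟨U, hU, hUs⟩ := Filter.mem_comap.mp hs
    obtain ⟨V, hV, hVc⟩ := main U hU
    rw [uniformity_prod,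
      show (uniformity G) = comap (fun p : G × G => p.2 / p.1) (𝓝 1) by
        simp only [div_eq_mul_inv]; rfl]
    apply Filter.mem_of_superset
      (Filter.inter_mem_inf
        (Filter.preimage_mem_comap (Filter.preimage_mem_comap hV))
        (Filter.preimage_mem_comap (Filter.preimage_mem_comap hV)))
    rintro ⟨⟨x, y⟩, ⟨x', y'⟩⟩ ⟨hx, hy⟩
    apply hUs
    have hb : x' / x ∈ V := hx
    have ha : y' / y ∈ V := hy
    have : (x' / y') / (x / y) = ((x' * y'⁻¹) * (y' / y)⁻¹ * (x' * y'⁻¹)⁻¹) * (x' / x) := by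
      simp only [div_eq_mul_inv, mul_inv_rev, inv_inv, mul_assoc, mul_inv_cancel_left,
        inv_mul_cancel_left]
    show (x' / y') * (x / y)⁻¹ ∈ U
    rw [← div_eq_mul_inv, this]
    exact hVc _ _ _ ha hb
  haveI hUAG : IsUniformAddGroup (Additive G) := ⟨hdiv⟩
  -- Step 4: total boundedness
  have htb : TotallyBounded (univ : Set G) := by
    intro d hd
    obtain ⟨U, hU, hUs⟩ := Filter.mem_comap.mp hd
    obtain ⟨F, hF⟩ := covR U⁻¹ (inv_mem_nhds_one G hU)
    refine ⟨(F : Set G), F.finite_toSet, fun x _ => ?_⟩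
    obtain ⟨f, hfF, hxf⟩ := hF x
    refine Set.mem_iUnion₂.mpr ⟨f, hfF, hUs ?_⟩
    show f * x⁻¹ ∈ U
    have : (x * f⁻¹)⁻¹ ∈ U := Set.mem_inv.mp hxf
    simpa [div_eq_mul_inv, mul_inv_rev] using this
  -- Step 5: completion is a compact group
  haveI : T2Space G := inferInstance
  haveI hT0 : T0Space (Additive G) := inferInstanceAs (T0Space G)
  haveI hPol : PolishSpace (Additive G) := inferInstanceAs (PolishSpace G)
  set Gh := UniformSpace.Completion (Additive G) with hGh
  have htb' : TotallyBounded (univ : Set (Additive G)) := htb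
  have htbGh : TotallyBounded (univ : Set Gh) := by
    have h1 : TotallyBounded (range ((↑) : Additive G → Gh)) := by
      rw [← Set.image_univ]
      exact htb'.image (UniformSpace.Completion.uniformContinuous_coe _)
    have h2 := h1.closure
    rwa [UniformSpace.Completion.denseRange_coe.closure_range] at h2
  haveI hcomp : CompactSpace Gh := by
    rw [← isCompact_univ_iff]
    exact isCompact_iff_totallyBounded_isComplete.mpr
      ⟨htbGh, completeSpace_iff_isComplete_univ.mp inferInstance⟩
  -- Step 6: the range of G in the completion is a dense Gδ
  set i : Additive G → Gh := ((↑) : Additive G → Gh) with hi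
  have hind : IsInducing i := (UniformSpace.Completion.isUniformInducing_coe _).isInducing
  have hdr : DenseRange i := UniformSpace.Completion.denseRange_coe
  have hGδ : IsGδ (range i) := isGδ_range_of_polish hind hdr
  -- Step 7: Baire category argument
  by_cases hsurj : range i = univ
  · apply hnc
    have hemb : Topology.IsEmbedding i :=
      (UniformSpace.Completion.isUniformEmbedding_coe _).isEmbedding
    have hcu : IsCompact (univ : Set (Additive G)) := by
      rw [hemb.isCompact_iff, Set.image_univ, hsurj]
      exact isCompact_univ
    exact ⟨hcu⟩
  · obtain ⟨yh, hyh⟩ : ∃ y : Gh, y ∉ range i := by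
      by_contra h
      push_neg at h
      exact hsurj (Set.eq_univ_of_forall h)
    have hres1 : range i ∈ residual Gh := residual_of_dense_Gδ hGδ hdr
    have hres2 : (fun z : Gh => yh + z) '' range i ∈ residual Gh := by
      have himg : (fun z : Gh => yh + z) '' range i
          = (fun z : Gh => -yh + z) ⁻¹' range i := by
        ext z
        simp only [Set.mem_image, Set.mem_preimage]
        constructor
        · rintro ⟨w, hw, rfl⟩; rwa [neg_add_cancel_left]
        · intro h; exact ⟨-yh + z, h, by rw [add_neg_cancel_left]⟩
      rw [himg]
      apply residual_of_dense_Gδ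
      · exact isGδ_preimage hGδ (continuous_const.add continuous_id)
      · exact Dense.preimage hdr (Homeomorph.addLeft (-yh)).isOpenMap
    have hmem : (range i ∩ (fun z : Gh => yh + z) '' range i).Nonempty := by
      haveI : Nonempty Gh := ⟨0⟩
      exact (dense_of_mem_residual (Filter.inter_mem hres1 hres2)).nonempty
    obtain ⟨z, hz1, w, hw, hwz⟩ := hmem
    obtain ⟨a, ha⟩ := hw
    obtain ⟨b, hb⟩ := hz1
    apply hyh
    refine ⟨b - a, ?_⟩
    have : i (b - a) = i b - i a := by
      simpa using (UniformSpace.Completion.coe_sub (b : Additive G) a)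
    rw [this, hb, ha, ← hwz]
    show yh + w - w = yh
    exact add_sub_cancel_right yh w
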